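/- Let n ≥ 1, let Λ_1, …, Λ_L be a partition of {1,…,n}, and let U be the HP-L circuit U = (⊗_{i∈Λ_L} H_i) ∏_{l=L−1}^{1} (CP_{Λ_l, Λ̄_l}(θ) ⊗_{i∈Λ_l} H_i), where Λ̄_l = {1,…,n} \ (Λ_1 ∪ ⋯ ∪ Λ_l) and CP applies controlled-phase gates CP_{jk}(θ_{jk}) between all pairs j ∈ Λ_l, k ∈ Λ̄_l. Then for computational basis states |b⟩ = |b_1⋯b_n⟩ and |b'⟩ = |b'_1⋯b'_n⟩, ⟨b'|U|b⟩ = 2^{−n/2} exp(i Σ_{j,k} θ̃_{jk} b'_j b_k), where θ̃_{jj} = π, θ̃_{jk} = θ_{jk} if qubit j receives its Hadamard in an earlier layer than qubit k, and θ̃_{jk} = 0 otherwise. In particular every matrix entry of U has modulus 2^{−n/2}. -/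

import Mathlib

/-- `⟨a|H|b⟩` for the single-qubit Hadamard gate. -/
noncomputable def Hgate (a b : Bool) : ℂ :=
  (Real.sqrt 2 : ℂ)⁻¹ * (if a && b then -1 else 1)

/-- Bit value of a boolean, as a complex number. -/
def bitC (b : Bool) : ℂ := if b then 1 else 0

/-- Transversal Hadamard gates applied to the qubits in `S` (identity elsewhere). -/
noncomputable def HS (n : ℕ) (S : Finset (Fin n)) :
    Matrix (Fin n → Bool) (Fin n → Bool) ℂ :=
  fun x y => ∏ i : Fin n, if i ∈ S then Hgate (x i) (y i) else (if x i = y i then 1 else 0)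

/-- Block of controlled-phase gates `CP_{jk}(θ_{jk})` between all pairs
`j ∈ A`, `k ∈ B` (a diagonal matrix). -/
noncomputable def CPblock (n : ℕ) (A B : Finset (Fin n)) (θ : Fin n → Fin n → ℝ) :
    Matrix (Fin n → Bool) (Fin n → Bool) ℂ :=
  fun x y => if x = y then
      Complex.exp (Complex.I * ∑ j ∈ A, ∑ k ∈ B, (θ j k : ℂ) * bitC (x j) * bitC (x k))
    else 0

/-- The HP-L circuit
`U = (⊗_{i∈Λ_L} H_i) ∏_{l=L−1}^{1} (CP_{Λ_l, Λ̄_l}(θ) ⊗_{i∈Λ_l} H_i)`,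
where `Λ̄_l = {i : l < lay i}` is the set of qubits whose Hadamard comes in a
later layer. -/
noncomputable def hpCircuit (n L : ℕ) (Λ : ℕ → Finset (Fin n))
    (lay : Fin n → ℕ) (θ : Fin n → Fin n → ℝ) :
    Matrix (Fin n → Bool) (Fin n → Bool) ℂ :=
  HS n (Λ L) *
    (((List.range' 1 (L - 1)).reverse.map
      (fun l => CPblock n (Λ l) (Finset.univ.filter fun i => l < lay i) θ * HS n (Λ l))).prod)

/-- Matrix entries of the HP-L circuit: for a partition `Λ_1, …, Λ_L` of the
qubits (`lay i` is the layer of qubit `i`),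
`⟨b'|U|b⟩ = 2^{−n/2} exp(i Σ_{j,k} θ̃_{jk} b'_j b_k)` where `θ̃_{jj} = π`,
`θ̃_{jk} = θ_{jk}` if `lay j < lay k`, and `θ̃_{jk} = 0` otherwise.  In
particular every entry has modulus `2^{−n/2}`. -/
lemma delta_prod {n : ℕ} (x b : Fin n → Bool) :
    (∏ i : Fin n, if x i = b i then (1:ℂ) else 0) = if x = b then 1 else 0 := by
  by_cases h : x = b
  · subst h; simp
  · rw [if_neg h]
    obtain ⟨i, hi⟩ : ∃ i, x i ≠ b i := by
      by_contra hc; push_neg at hc; exact h (funext hc)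
    exact Finset.prod_eq_zero (Finset.mem_univ i) (by simp [hi])

lemma CP_mul {n : ℕ} (A B : Finset (Fin n)) (θ : Fin n → Fin n → ℝ)
    (N : Matrix (Fin n → Bool) (Fin n → Bool) ℂ) (x y : Fin n → Bool) :
    (CPblock n A B θ * N) x y =
      Complex.exp (Complex.I * ∑ j ∈ A, ∑ k ∈ B, (θ j k : ℂ) * bitC (x j) * bitC (x k)) * N x y := by
  simp [Matrix.mul_apply, CPblock, ite_mul, Finset.sum_ite_eq]

lemma key {n : ℕ} (Λ : ℕ → Finset (Fin n)) (lay : Fin n → ℕ) (θ : Fin n → Fin n → ℝ)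
    (hlay1 : ∀ i, 1 ≤ lay i) (hpart : ∀ i l, i ∈ Λ l ↔ lay i = l) :
    ∀ m (x b : Fin n → Bool),
    (((List.range' 1 m).reverse.map
      (fun l => CPblock n (Λ l) (Finset.univ.filter fun i => l < lay i) θ * HS n (Λ l))).prod) x b
    = (∏ i : Fin n, if lay i ≤ m then Hgate (x i) (b i) else (if x i = b i then 1 else 0)) *
      Complex.exp (Complex.I * ∑ j : Fin n, ∑ k : Fin n,
        (if lay j ≤ m ∧ lay j < lay k then (θ j k : ℂ) else 0) * bitC (x j) * bitC (b k)) := by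
  intro m
  induction m with
  | zero =>
    intro x b
    have h1 : ∀ i : Fin n, ¬ lay i ≤ 0 := fun i => by have := hlay1 i; omega
    simp [h1, delta_prod, Matrix.one_apply]
  | succ m ih =>
    intro x b
    rw [show (List.range' 1 (m+1)) = List.range' 1 m ++ [1 + m] from List.range'_1_concat,
        List.reverse_append, List.reverse_singleton, List.singleton_append,
        List.map_cons, List.prod_cons, Matrix.mul_assoc, CP_mul, Matrix.mul_apply]
    simp only [ih]
    by_cases hxb : ∀ i, m + 1 < lay i → x i = b i
    · -- the sum has a single nonzero term at y*
      set ys : Fin n → Bool := fun i => if lay i = m + 1 then b i else x i with hys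
      rw [Finset.sum_eq_single ys]
      · -- main computation
        have hprod : (HS n (Λ (1+m)) x ys) *
            (∏ i : Fin n, if lay i ≤ m then Hgate (ys i) (b i) else (if ys i = b i then 1 else 0))
            = ∏ i : Fin n, if lay i ≤ m + 1 then Hgate (x i) (b i) else (if x i = b i then 1 else 0) := by
          rw [HS, ← Finset.prod_mul_distrib]
          refine Finset.prod_congr rfl (fun i _ => ?_)
          by_cases h1 : lay i = m + 1
          · simp [hpart, hys, h1, Nat.add_comm]
          · by_cases h2 : lay i ≤ m
            · simp [hpart, hys, h1, h2, show lay i ≤ m + 1 by omega, show ¬ lay i = 1 + m by omega]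
            · simp [hpart, hys, h1, h2, show ¬ lay i ≤ m + 1 by omega, show ¬ lay i = 1 + m by omega]
        have hphase :
            Complex.exp (Complex.I * ∑ j ∈ Λ (1+m), ∑ k ∈ (Finset.univ.filter fun i => 1 + m < lay i),
              (θ j k : ℂ) * bitC (x j) * bitC (x k)) *
            Complex.exp (Complex.I * ∑ j : Fin n, ∑ k : Fin n,
              (if lay j ≤ m ∧ lay j < lay k then (θ j k : ℂ) else 0) * bitC (ys j) * bitC (b k))
            = Complex.exp (Complex.I * ∑ j : Fin n, ∑ k : Fin n,
              (if lay j ≤ m + 1 ∧ lay j < lay k then (θ j k : ℂ) else 0) * bitC (x j) * bitC (b k)) := by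
          rw [← Complex.exp_add, ← mul_add]
          congr 1
          have hA : Λ (1+m) = Finset.univ.filter (fun i => lay i = 1 + m) :=
            Finset.ext (by simp [hpart])
          rw [hA, Finset.sum_filter, ← Finset.sum_add_distrib]
          congr 1
          refine Finset.sum_congr rfl (fun j _ => ?_)
          rw [Finset.sum_filter]
          rw [show (if lay j = 1 + m then
                (∑ k : Fin n, if 1 + m < lay k then (θ j k : ℂ) * bitC (x j) * bitC (x k) else 0)
              else 0)
              = ∑ k : Fin n, if lay j = 1 + m ∧ 1 + m < lay k then
                  (θ j k : ℂ) * bitC (x j) * bitC (x k) else 0 from by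
            split_ifs with h <;> simp [h]]
          rw [← Finset.sum_add_distrib]
          refine Finset.sum_congr rfl (fun k _ => ?_)
          by_cases h1 : lay j = 1 + m
          · by_cases h2 : 1 + m < lay k
            · have hk : x k = b k := hxb k (by omega)
              simp [h1, h2, hk, show ¬ lay j ≤ m by omega, show lay j ≤ m + 1 by omega,
                show lay j < lay k by omega, show 1 + m ≤ m + 1 by omega]
            · simp [h1, h2, show ¬ lay j ≤ m by omega,
                show ¬ (lay j ≤ m + 1 ∧ lay j < lay k) by omega]
          · by_cases h2 : lay j ≤ m
            · have hj : ys j = x j := by simp [hys, show ¬ lay j = m + 1 by omega]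
              simp [h1, h2, hj, show lay j ≤ m + 1 by omega]
            · simp [h1, h2, show ¬ lay j ≤ m + 1 by omega]
        rw [← hprod, ← hphase]
        ring
      · intro y _ hy
        obtain ⟨i, hi⟩ : ∃ i, y i ≠ ys i := by
          by_contra hc; push_neg at hc; exact hy (funext hc)
        by_cases h1 : lay i = m + 1
        · have : y i ≠ b i := by simpa [hys, h1] using hi
          have hz : (∏ i : Fin n, if lay i ≤ m then Hgate (y i) (b i)
              else (if y i = b i then 1 else 0)) = 0 :=
            Finset.prod_eq_zero (Finset.mem_univ i) (by simp [show ¬ lay i ≤ m by omega, this])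
          simp [hz]
        · have hxi : y i ≠ x i := by simpa [hys, h1] using hi
          have hz : HS n (Λ (1+m)) x y = 0 :=
            Finset.prod_eq_zero (Finset.mem_univ i)
              (by simp [hpart, show ¬ lay i = 1 + m by omega, Ne.symm hxi])
          simp [hz]
      · simp
    · -- both sides vanish
      push_neg at hxb
      obtain ⟨i, hgt, hne⟩ := hxb
      have hR : (∏ i : Fin n, if lay i ≤ m + 1 then Hgate (x i) (b i)
          else (if x i = b i then 1 else 0)) = 0 :=
        Finset.prod_eq_zero (Finset.mem_univ i) (by simp [show ¬ lay i ≤ m + 1 by omega, hne])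
      rw [hR, zero_mul]
      refine mul_eq_zero_of_right _ (Finset.sum_eq_zero fun y _ => ?_)
      by_cases hyx : y i = x i
      · have : y i ≠ b i := by rw [hyx]; exact hne
        have hz : (∏ i : Fin n, if lay i ≤ m then Hgate (y i) (b i)
            else (if y i = b i then 1 else 0)) = 0 :=
          Finset.prod_eq_zero (Finset.mem_univ i) (by simp [show ¬ lay i ≤ m by omega, this])
        simp [hz]
      · have hz : HS n (Λ (1+m)) x y = 0 :=
          Finset.prod_eq_zero (Finset.mem_univ i)
            (by simp [hpart, show ¬ lay i = 1 + m by omega, Ne.symm hyx])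
        simp [hz]

theorem hp_circuit_entry (n L : ℕ) (hn : 1 ≤ n) (hL : 1 ≤ L)
    (Λ : ℕ → Finset (Fin n)) (lay : Fin n → ℕ) (θ : Fin n → Fin n → ℝ)
    (hlay : ∀ i : Fin n, 1 ≤ lay i ∧ lay i ≤ L)
    (hpart : ∀ (i : Fin n) (l : ℕ), i ∈ Λ l ↔ lay i = l)
    (b b' : Fin n → Bool) :
    hpCircuit n L Λ lay θ b' b
      = (Real.sqrt (2 ^ n) : ℂ)⁻¹ *
        Complex.exp (Complex.I * ∑ j : Fin n, ∑ k : Fin n,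
          (if j = k then ((Real.pi : ℝ) : ℂ)
            else if lay j < lay k then ((θ j k : ℝ) : ℂ) else 0) *
            bitC (b' j) * bitC (b k)) ∧
    ‖hpCircuit n L Λ lay θ b' b‖ = (Real.sqrt (2 ^ n))⁻¹ := by
  have hlay1 : ∀ i, 1 ≤ lay i := fun i => (hlay i).1
  have hlayL : ∀ i, lay i ≤ L := fun i => (hlay i).2
  have hmain : hpCircuit n L Λ lay θ b' b
      = (Real.sqrt (2 ^ n) : ℂ)⁻¹ *
        Complex.exp (Complex.I * ∑ j : Fin n, ∑ k : Fin n,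
          (if j = k then ((Real.pi : ℝ) : ℂ)
            else if lay j < lay k then ((θ j k : ℝ) : ℂ) else 0) *
            bitC (b' j) * bitC (b k)) := by
    rw [hpCircuit, Matrix.mul_apply]
    simp only [key Λ lay θ hlay1 hpart (L-1)]
    set xs : Fin n → Bool := fun i => if lay i = L then b i else b' i with hxs
    rw [Finset.sum_eq_single xs]
    · have hprod : (HS n (Λ L) b' xs) *
          (∏ i : Fin n, if lay i ≤ L - 1 then Hgate (xs i) (b i) else (if xs i = b i then 1 else 0))
          = ∏ i : Fin n, Hgate (b' i) (b i) := by
        rw [HS, ← Finset.prod_mul_distrib]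
        refine Finset.prod_congr rfl (fun i _ => ?_)
        by_cases h1 : lay i = L
        · have := hlay1 i
          simp [hpart, hxs, h1, show ¬ L ≤ L - 1 by omega]
        · have := hlayL i
          simp [hpart, hxs, h1, show lay i ≤ L - 1 by omega]
      have hH : (∏ i : Fin n, Hgate (b' i) (b i))
          = (Real.sqrt (2 ^ n) : ℂ)⁻¹ *
            Complex.exp (Complex.I * ∑ i : Fin n, ((Real.pi : ℝ) : ℂ) * bitC (b' i) * bitC (b i)) := by
        simp only [Hgate]
        rw [Finset.prod_mul_distrib, Finset.prod_const, Finset.card_univ, Fintype.card_fin]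
        congr 1
        · rw [inv_pow]
          congr 1
          rw [show ((Real.sqrt 2 : ℂ)) ^ n = ((Real.sqrt 2 ^ n : ℝ) : ℂ) by push_cast; ring]
          norm_cast
          rw [show ((2^n : ℕ) : ℝ) = (2:ℝ)^n by push_cast; ring]
          have hsq : ∀ N : ℕ, Real.sqrt 2 ^ N = Real.sqrt ((2:ℝ) ^ N) := by
            intro N
            induction N with
            | zero => simp
            | succ k ih => rw [pow_succ, pow_succ, ih, ← Real.sqrt_mul (by positivity)]
          exact hsq n
        · have h1 : ∀ i : Fin n, (if b' i && b i then (-1 : ℂ) else 1)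
              = Complex.exp (Complex.I * (((Real.pi : ℝ) : ℂ) * bitC (b' i) * bitC (b i))) := by
            intro i
            cases hb' : b' i <;> cases hb : b i <;>
              simp [bitC, mul_comm Complex.I, Complex.exp_pi_mul_I]
          rw [Finset.prod_congr rfl (fun i _ => h1 i), ← Complex.exp_sum, ← Finset.mul_sum]
      have hSx : (∑ j : Fin n, ∑ k : Fin n,
            (if lay j ≤ L - 1 ∧ lay j < lay k then (θ j k : ℂ) else 0) * bitC (xs j) * bitC (b k))
          = ∑ j : Fin n, ∑ k : Fin n,
            (if lay j ≤ L - 1 ∧ lay j < lay k then (θ j k : ℂ) else 0) * bitC (b' j) * bitC (b k) := by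
        refine Finset.sum_congr rfl (fun j _ => Finset.sum_congr rfl (fun k _ => ?_))
        by_cases h : lay j ≤ L - 1 ∧ lay j < lay k
        · have : xs j = b' j := by simp [hxs, show ¬ lay j = L by omega]
          rw [this]
        · simp [h]
      have hsum : (∑ j : Fin n, ∑ k : Fin n,
            (if j = k then ((Real.pi : ℝ) : ℂ)
              else if lay j < lay k then ((θ j k : ℝ) : ℂ) else 0) * bitC (b' j) * bitC (b k))
          = (∑ i : Fin n, ((Real.pi : ℝ) : ℂ) * bitC (b' i) * bitC (b i))
            + ∑ j : Fin n, ∑ k : Fin n,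
              (if lay j ≤ L - 1 ∧ lay j < lay k then (θ j k : ℂ) else 0) * bitC (b' j) * bitC (b k) := by
        have hdiag : (∑ i : Fin n, ((Real.pi : ℝ) : ℂ) * bitC (b' i) * bitC (b i))
            = ∑ j : Fin n, ∑ k : Fin n,
              (if j = k then ((Real.pi : ℝ) : ℂ) else 0) * bitC (b' j) * bitC (b k) := by
          refine Finset.sum_congr rfl (fun j _ => ?_)
          rw [Finset.sum_eq_single j]
          · simp
          · intro k _ hk; simp [Ne.symm hk]
          · simp
        rw [hdiag, ← Finset.sum_add_distrib]
        refine Finset.sum_congr rfl (fun j _ => ?_)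
        rw [← Finset.sum_add_distrib]
        refine Finset.sum_congr rfl (fun k _ => ?_)
        by_cases h1 : j = k
        · subst h1
          simp
        · have hkL := hlayL k
          by_cases h2 : lay j < lay k
          · simp [h1, h2, show lay j ≤ L - 1 by omega]
          · simp [h1, h2]
      rw [hsum]
      rw [← mul_assoc, hprod, hH, mul_assoc, ← Complex.exp_add, ← mul_add, hSx]
    · intro y _ hy
      obtain ⟨i, hi⟩ : ∃ i, y i ≠ xs i := by
        by_contra hc; push_neg at hc; exact hy (funext hc)
      by_cases h1 : lay i = L
      · have hne : y i ≠ b i := by simpa [hxs, h1] using hi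
        have := hlay1 i
        have hz : (∏ i : Fin n, if lay i ≤ L - 1 then Hgate (y i) (b i)
            else (if y i = b i then 1 else 0)) = 0 :=
          Finset.prod_eq_zero (Finset.mem_univ i)
            (by simp [show ¬ lay i ≤ L - 1 by omega, hne])
        simp [hz]
      · have hne : y i ≠ b' i := by simpa [hxs, h1] using hi
        have hz : HS n (Λ L) b' y = 0 :=
          Finset.prod_eq_zero (Finset.mem_univ i)
            (by simp [hpart, h1, Ne.symm hne])
        simp [hz]
    · simp
  refine ⟨hmain, ?_⟩
  rw [hmain]
  have hS : (∑ j : Fin n, ∑ k : Fin n,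
        (if j = k then ((Real.pi : ℝ) : ℂ)
          else if lay j < lay k then ((θ j k : ℝ) : ℂ) else 0) * bitC (b' j) * bitC (b k))
      = ((∑ j : Fin n, ∑ k : Fin n,
          (if j = k then Real.pi else if lay j < lay k then θ j k else 0)
            * (if b' j then (1:ℝ) else 0) * (if b k then (1:ℝ) else 0) : ℝ) : ℂ) := by
    push_cast
    refine Finset.sum_congr rfl (fun j _ => Finset.sum_congr rfl (fun k _ => ?_))
    simp [bitC, apply_ite (fun x : ℝ => (x : ℂ))]
  rw [hS]
  rw [norm_mul, norm_inv, Complex.norm_real, Real.norm_of_nonneg (Real.sqrt_nonneg _),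
    mul_comm Complex.I, Complex.norm_exp_ofReal_mul_I, mul_one]
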